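/- Let 𝒞 ⊆ ℝ²_{≥0} be non-empty, compact, convex, and closed under projections onto the axes. Then 𝒞 = {(x,y) ∈ ℝ²_{≥0} | for all α ∈ [0,1], αx + (1−α)y ≤ C^α(𝒞)}. -/

import Mathlib

/-- **Characterization of special regions in the plane** (Lemma 4 of the paper).
A non-empty, compact, convex subset of `ℝ²_{≥0}` that is closed under projections
onto the axes equals the set of nonnegative pairs dominated by all its support
function values `C^α = max_{(x,y) ∈ 𝒞} (α x + (1 - α) y)`, `α ∈ [0,1]`. -/
theorem region_characterization (C : Set (ℝ × ℝ)) (hne : C.Nonempty)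
    (hcomp : IsCompact C) (hconv : Convex ℝ C)
    (hnonneg : ∀ p ∈ C, 0 ≤ p.1 ∧ 0 ≤ p.2)
    (hproj : ∀ p ∈ C, ((p.1, 0) : ℝ × ℝ) ∈ C ∧ ((0, p.2) : ℝ × ℝ) ∈ C) :
    C = {p : ℝ × ℝ | 0 ≤ p.1 ∧ 0 ≤ p.2 ∧
      ∀ α ∈ Set.Icc (0 : ℝ) 1,
        α * p.1 + (1 - α) * p.2 ≤
          sSup ((fun q : ℝ × ℝ => α * q.1 + (1 - α) * q.2) '' C)} := by
  have h00 : ((0, 0) : ℝ × ℝ) ∈ C := by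
    obtain ⟨q, hq⟩ := hne
    have h1 := (hproj q hq).1
    have h2 := (hproj _ h1).2
    simpa using h2
  ext p
  constructor
  · intro hp
    refine ⟨(hnonneg p hp).1, (hnonneg p hp).2, ?_⟩
    intro α hα
    have hc : IsCompact ((fun q : ℝ × ℝ => α * q.1 + (1 - α) * q.2) '' C) :=
      hcomp.image ((continuous_const.mul continuous_fst).add (continuous_const.mul continuous_snd))
    exact le_csSup hc.bddAbove ⟨p, hp, rfl⟩
  · rintro ⟨hx, hy, hle⟩
    by_contra hp
    obtain ⟨f, u, hfu, hup⟩ :=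
      geometric_hahn_banach_closed_point hconv hcomp.isClosed hp
    set a := f (1, 0) with ha_def
    set b := f (0, 1) with hb_def
    have hf : ∀ q : ℝ × ℝ, f q = a * q.1 + b * q.2 := by
      intro q
      have hq : q = q.1 • ((1 : ℝ), (0 : ℝ)) + q.2 • ((0 : ℝ), (1 : ℝ)) := by
        simp [Prod.ext_iff]
      rw [hq, map_add, map_smul, map_smul, smul_eq_mul, smul_eq_mul]
      simp [ha_def, hb_def, mul_comm]
    set a' := max a 0 with ha'
    set b' := max b 0 with hb'
    have ha'0 : 0 ≤ a' := le_max_right a 0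
    have hb'0 : 0 ≤ b' := le_max_right b 0
    have hkey : ∀ q ∈ C, a' * q.1 + b' * q.2 ≤ u := by
      intro q hq
      rcases le_or_gt 0 a with ha | ha
      · rcases le_or_gt 0 b with hb | hb
        · have h := (hfu q hq).le
          rw [hf] at h
          simpa [ha', hb', max_eq_left ha, max_eq_left hb] using h
        · have h := (hfu _ (hproj q hq).1).le
          rw [hf] at h
          simp only [ha', hb', max_eq_left ha, max_eq_right hb.le]
          simpa using h
      · rcases le_or_gt 0 b with hb | hb
        · have h := (hfu _ (hproj q hq).2).le
          rw [hf] at h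
          simp only [ha', hb', max_eq_right ha.le, max_eq_left hb]
          simpa using h
        · have h := (hfu _ h00).le
          rw [hf] at h
          simp only [ha', hb', max_eq_right ha.le, max_eq_right hb.le]
          simpa using h
    have hfp : f p ≤ a' * p.1 + b' * p.2 := by
      rw [hf]
      exact add_le_add (mul_le_mul_of_nonneg_right (le_max_left a 0) hx)
        (mul_le_mul_of_nonneg_right (le_max_left b 0) hy)
    rcases eq_or_lt_of_le (add_nonneg ha'0 hb'0) with hs | hs
    · -- a' + b' = 0, so a' = b' = 0
      have ha0 : a' = 0 := by linarith [ha'0, hb'0]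
      have hb0 : b' = 0 := by linarith [ha'0, hb'0]
      have h0u : (0 : ℝ) ≤ u := by simpa [ha0, hb0] using hkey _ h00
      rw [ha0, hb0] at hfp
      linarith [hup]
    · set s := a' + b' with hs_def
      set α := a' / s with hα_def
      have hαIcc : α ∈ Set.Icc (0 : ℝ) 1 := by
        constructor
        · exact div_nonneg ha'0 hs.le
        · rw [div_le_one hs]; linarith
      have h1α : 1 - α = b' / s := by
        rw [hα_def, eq_div_iff hs.ne', sub_mul, div_mul_cancel₀ _ hs.ne']
        linarith
      have hcont : Continuous (fun q : ℝ × ℝ => α * q.1 + (1 - α) * q.2) :=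
        (continuous_const.mul continuous_fst).add (continuous_const.mul continuous_snd)
      obtain ⟨q0, hq0, hq0eq⟩ :=
        (hcomp.image hcont).sSup_mem (hne.image _)
      have hle' := hle α hαIcc
      rw [← hq0eq] at hle'
      have hmul : s * (α * p.1 + (1 - α) * p.2) ≤
          s * (α * q0.1 + (1 - α) * q0.2) :=
        mul_le_mul_of_nonneg_left hle' hs.le
      have hsa : s * α = a' := by rw [hα_def]; field_simp
      have hsb : s * (1 - α) = b' := by rw [h1α]; field_simp
      have h1 : a' * p.1 + b' * p.2 ≤ a' * q0.1 + b' * q0.2 := by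
        calc a' * p.1 + b' * p.2 = s * (α * p.1 + (1 - α) * p.2) := by
              rw [mul_add, ← mul_assoc, ← mul_assoc, hsa, hsb]
          _ ≤ s * (α * q0.1 + (1 - α) * q0.2) := hmul
          _ = a' * q0.1 + b' * q0.2 := by
              rw [mul_add, ← mul_assoc, ← mul_assoc, hsa, hsb]
      linarith [hkey q0 hq0, hup]
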